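/- For every N with 6 < N < 39 and every admissible word w of length N−4 over the alphabet {→1,←1,→2,←2}, there exists a minimal conformation of length N whose type sequence equals w (i.e., every admissible word of these lengths is realized without self-intersection). -/

import Mathlib

/-- Points of the cubic lattice `ℤ³`. -/
abbrev P3 : Type := Fin 3 → ℤ

def e1 : P3 := ![1, 0, 0]
def e2 : P3 := ![0, 1, 0]
def e3 : P3 := ![0, 0, 1]

/-- Squared Euclidean norm of an integer vector; it equals `1` iff the
Euclidean norm equals `1`. -/
def sqNorm (v : P3) : ℤ := ∑ k, (v k) ^ 2

/-- A conformation of length `N`: an injective map on `{1, …, N}` whose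
consecutive steps have Euclidean length one. -/
def IsConformation (N : ℕ) (Γ : ℕ → P3) : Prop :=
  Set.InjOn Γ (Set.Icc 1 N) ∧ ∀ i, 1 ≤ i → i < N → sqNorm (Γ (i + 1) - Γ i) = 1

/-- A lattice rotation: an orthogonal integer matrix of determinant one
(equivalently, a linear isometry of `ℝ³` mapping `ℤ³` onto `ℤ³` with
determinant one). -/
def IsLatticeRotation (R : Matrix (Fin 3) (Fin 3) ℤ) : Prop :=
  R.transpose * R = 1 ∧ R.det = 1

/-- Equivalence of length-5 conformations: `Δ' k = R (Δ k) + t` for a lattice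
rotation `R` and translation `t ∈ ℤ³`. -/
def Equiv5 (Δ Δ' : Fin 5 → P3) : Prop :=
  ∃ (R : Matrix (Fin 3) (Fin 3) ℤ) (t : P3),
    IsLatticeRotation R ∧ ∀ k, Δ' k = R.mulVec (Δ k) + t

/-- Reversal of a length-5 conformation (`k ↦ Δ (6 - k)` in 1-based indexing). -/
def rev5 (Δ : Fin 5 → P3) : Fin 5 → P3 := fun k => Δ k.rev

/-- Conformation 1: vertices (0,0,0), (1,0,0), (1,1,0), (0,1,0), (0,1,1). -/
def conf1 : Fin 5 → P3 := ![![0, 0, 0], ![1, 0, 0], ![1, 1, 0], ![0, 1, 0], ![0, 1, 1]]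

/-- Conformation 2: vertices (0,0,0), (0,1,0), (−1,1,0), (−1,1,1), (−1,0,1). -/
def conf2 : Fin 5 → P3 := ![![0, 0, 0], ![0, 1, 0], ![-1, 1, 0], ![-1, 1, 1], ![-1, 0, 1]]

/-- The `i`-th window of `Γ`: the 5-tuple `(Γ(i-2), …, Γ(i+2))`. -/
def window (Γ : ℕ → P3) (i : ℕ) : Fin 5 → P3 := fun k => Γ (i - 2 + (k : ℕ))

/-- `Φ(Δ) = 1`: the 5-tuple `Δ` or its reversal is equivalent to
conformation 1 or to conformation 2. -/
def WindowGood (Δ : Fin 5 → P3) : Prop :=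
  Equiv5 Δ conf1 ∨ Equiv5 (rev5 Δ) conf1 ∨ Equiv5 Δ conf2 ∨ Equiv5 (rev5 Δ) conf2

open Classical in
/-- The function `Φ` on length-5 conformations. -/
noncomputable def Phi (Δ : Fin 5 → P3) : ℤ := if WindowGood Δ then 1 else 0

/-- The energy `E₅(Γ) = −Σ_{i=3}^{N−2} Φ(Γ_i)`. -/
noncomputable def E5 (N : ℕ) (Γ : ℕ → P3) : ℤ :=
  -∑ i ∈ Finset.Icc 3 (N - 2), Phi (window Γ i)

/-- A minimal conformation: a conformation all of whose windows satisfy `Φ = 1`. -/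
def IsMinimal (N : ℕ) (Γ : ℕ → P3) : Prop :=
  IsConformation N Γ ∧ ∀ i, 3 ≤ i → i ≤ N - 2 → WindowGood (window Γ i)

/-- The walk starting at the origin (in 1-based indexing) whose steps
cyclically repeat the given list. -/
def cyclicWalk (steps : List P3) : ℕ → P3
  | 0 => 0
  | 1 => 0
  | n + 2 => cyclicWalk steps (n + 1) + steps.getD (n % steps.length) 0

/-- The 16-term step sequence of the lattice α-helix. -/
def alphaStepList : List P3 :=
  [e1, e2, -e1, e3, -e2, e1, e2, e3, -e1, -e2, e1, e3, e2, -e1, -e2, e3]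

/-- The 4-term step sequence of the lattice β-strand. -/
def betaStepList : List P3 := [e1, e2, -e1, e3]

/-- The lattice α-helix (`H(1) = 0`, steps cyclically repeating `alphaStepList`). -/
def alphaHelix : ℕ → P3 := cyclicWalk alphaStepList

/-- The lattice β-strand (`B(1) = 0`, steps cyclically repeating `betaStepList`). -/
def betaStrand : ℕ → P3 := cyclicWalk betaStepList

/-- The four directed types of windows. -/
inductive DType : Type
  | r1  -- →1
  | l1  -- ←1
  | r2  -- →2
  | l2  -- ←2
deriving DecidableEq

/-- A window `Δ` has directed type `→1` (resp. `→2`) if it is equivalent to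
conformation 1 (resp. 2), and `←1` (resp. `←2`) if its reversal is. -/
def HasType (Δ : Fin 5 → P3) : DType → Prop
  | DType.r1 => Equiv5 Δ conf1
  | DType.l1 => Equiv5 (rev5 Δ) conf1
  | DType.r2 => Equiv5 Δ conf2
  | DType.l2 => Equiv5 (rev5 Δ) conf2

/-- The six allowed ordered pairs of directed types of consecutive windows:
(→1,←1), (←1,→1), (→1,→2), (→2,←2), (←2,←1), (←2,→2). -/
def allowedPairs : List (DType × DType) :=
  [(DType.r1, DType.l1), (DType.l1, DType.r1), (DType.r1, DType.r2),
   (DType.r2, DType.l2), (DType.l2, DType.l1), (DType.l2, DType.r2)]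

/-- `w` is the type sequence of `Γ` (a conformation of length `N`):
`w` has length `N − 4` and its `j`-th letter is the directed type of the
window `Γ_{3+j}`, `j = 0, …, N−5`. -/
def HasTypeSeq (N : ℕ) (Γ : ℕ → P3) (w : List DType) : Prop :=
  w.length = N - 4 ∧ ∀ j (h : j < w.length), HasType (window Γ (3 + j)) (w.get ⟨j, h⟩)

/-- The word `α = →1→2←2←1`. -/
def wordAlpha : List DType := [DType.r1, DType.r2, DType.l2, DType.l1]

/-- The word `β = →1←1`. -/
def wordBeta : List DType := [DType.r1, DType.l1]

/-- `v` is a finite concatenation of copies of the words `α` and `β`. -/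
def IsABConcat (v : List DType) : Prop :=
  ∃ L : List (List DType), (∀ u ∈ L, u = wordAlpha ∨ u = wordBeta) ∧ v = L.flatten

/-- A word is admissible if it is a contiguous subword (factor) of some finite
concatenation of copies of `α` and `β`. -/
def Admissible (w : List DType) : Prop := ∃ v, IsABConcat v ∧ w <:+: v

/-- The two kinds of monomers. -/
inductive AB : Type
  | A
  | B
deriving DecidableEq

/-- The number of occurrences of the letter `c` in the `i`-th 5-tuple
`S(i−2), …, S(i+2)` of the sequence `S`. -/
def countLetter (c : AB) (S : ℕ → AB) (i : ℕ) : ℕ :=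
  ((Finset.Icc (i - 2) (i + 2)).filter fun k => S k = c).card

open Classical in
/-- `Φ₁(Δ) = 1` iff `Δ` or its reversal is equivalent to conformation 1. -/
noncomputable def Phi1 (Δ : Fin 5 → P3) : ℝ :=
  if Equiv5 Δ conf1 ∨ Equiv5 (rev5 Δ) conf1 then 1 else 0

open Classical in
/-- `Φ₂(Δ) = 1` iff `Δ` or its reversal is equivalent to conformation 2. -/
noncomputable def Phi2 (Δ : Fin 5 → P3) : ℝ :=
  if Equiv5 Δ conf2 ∨ Equiv5 (rev5 Δ) conf2 then 1 else 0

/-- The heteropolymer energy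
`E₅′(S,Γ) = −Σᵢ [#_B(Sᵢ)(Φ₁(Γᵢ) + ε Φ₂(Γᵢ)) + #_A(Sᵢ)(Φ₂(Γᵢ) + ε Φ₁(Γᵢ))]`. -/
noncomputable def E5' (ε : ℝ) (S : ℕ → AB) (N : ℕ) (Γ : ℕ → P3) : ℝ :=
  -∑ i ∈ Finset.Icc 3 (N - 2),
    ((countLetter AB.B S i : ℝ) * (Phi1 (window Γ i) + ε * Phi2 (window Γ i)) +
      (countLetter AB.A S i : ℝ) * (Phi2 (window Γ i) + ε * Phi1 (window Γ i)))

namespace Real14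

inductive Dir | xp | xm | yp | ym | zp | zm
deriving DecidableEq

instance : Fintype Dir :=
  ⟨⟨↑[Dir.xp, Dir.xm, Dir.yp, Dir.ym, Dir.zp, Dir.zm], by decide⟩, fun d => by cases d <;> decide⟩

inductive St | a0 | a1 | a2 | a3 | b0 | b1
deriving DecidableEq

instance : Fintype St :=
  ⟨⟨↑[St.a0, St.a1, St.a2, St.a3, St.b0, St.b1], by decide⟩, fun d => by cases d <;> decide⟩

def negD : Dir → Dir
  | .xp => .xm | .xm => .xp | .yp => .ym | .ym => .yp | .zp => .zm | .zm => .zp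

def crossD : Dir → Dir → Dir
  | .xp, .yp => .zp
  | .xp, .ym => .zm
  | .xp, .zp => .ym
  | .xp, .zm => .yp
  | .xm, .yp => .zm
  | .xm, .ym => .zp
  | .xm, .zp => .yp
  | .xm, .zm => .ym
  | .yp, .xp => .zm
  | .yp, .xm => .zp
  | .yp, .zp => .xp
  | .yp, .zm => .xm
  | .ym, .xp => .zp
  | .ym, .xm => .zm
  | .ym, .zp => .xm
  | .ym, .zm => .xp
  | .zp, .xp => .yp
  | .zp, .xm => .ym
  | .zp, .yp => .xm
  | .zp, .ym => .xp
  | .zm, .xp => .ym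
  | .zm, .xm => .yp
  | .zm, .yp => .xp
  | .zm, .ym => .xm
  | x, _ => x

def dv : Dir → P3
  | .xp => ![1,0,0] | .xm => ![-1,0,0] | .yp => ![0,1,0]
  | .ym => ![0,-1,0] | .zp => ![0,0,1] | .zm => ![0,0,-1]

abbrev V3 := ℤ × ℤ × ℤ

def dvV : Dir → V3
  | .xp => (1,0,0) | .xm => (-1,0,0) | .yp => (0,1,0) | .ym => (0,-1,0)
  | .zp => (0,0,1) | .zm => (0,0,-1)

def fstep : DType → Dir → Dir → Dir → Dir
  | .r1, x, y, _ => crossD x y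
  | .l1, _, y, _ => negD y
  | _,   x, _, _ => negD x

def letterOf : St → DType
  | .a0 => .r1 | .a1 => .r2 | .a2 => .l2 | .a3 => .l1 | .b0 => .r1 | .b1 => .l1

def succsOf : St → List St
  | .a0 => [.a1] | .a1 => [.a2] | .a2 => [.a3] | .b0 => [.b1]
  | _ => [.a0, .b0]

def Accepts : St → List DType → Prop
  | _, [] => True
  | s, t :: r => letterOf s = t ∧ ∃ s' ∈ succsOf s, Accepts s' r

def orthoD (a b : Dir) : Bool := b ≠ a && b ≠ negD a

def pat3 : DType → Dir → Dir → Dir × Dir × Dir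
  | .r1, a, b => (a, b, negD a)
  | .r2, a, b => (b, negD a, crossD a b)
  | .l1, a, b => (negD (crossD a b), a, negD b)
  | .l2, a, b => (b, negD (crossD a b), a)

def p1 (t : DType) (a b : Dir) : Dir := (pat3 t a b).1
def p2 (t : DType) (a b : Dir) : Dir := (pat3 t a b).2.1
def q3 (t : DType) (a b : Dir) : Dir := (pat3 t a b).2.2
def p4 (t : DType) (a b : Dir) : Dir := fstep t (p1 t a b) (p2 t a b) (q3 t a b)

def patL (t : DType) (a b : Dir) : List Dir := [p1 t a b, p2 t a b, q3 t a b, p4 t a b]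

def dirL : List Dir := [.xp, .xm, .yp, .ym, .zp, .zm]
def tyL : List DType := [.r1, .l1, .r2, .l2]
def stL : List St := [.a0, .a1, .a2, .a3, .b0, .b1]

lemma mem_dirL (d : Dir) : d ∈ dirL := by cases d <;> simp [dirL]
lemma mem_stL (s : St) : s ∈ stL := by cases s <;> simp [stL]

def patB (t : DType) (x y z : Dir) : Bool :=
  dirL.any fun a => dirL.any fun b => orthoD a b && decide (pat3 t a b = (x, y, z))

def PatD (t : DType) (x y z : Dir) : Prop := patB t x y z = true

lemma PatD_elim {t x y z} (h : PatD t x y z) :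
    ∃ a b, orthoD a b = true ∧ pat3 t a b = (x, y, z) := by
  simp only [PatD, patB, List.any_eq_true, Bool.and_eq_true, decide_eq_true_eq] at h
  obtain ⟨a, _, b, _, hab, hp⟩ := h
  exact ⟨a, b, hab, hp⟩

lemma PatD_intro {t a b x y z} (hab : orthoD a b = true) (h : pat3 t a b = (x, y, z)) :
    PatD t x y z := by
  simp only [PatD, patB, List.any_eq_true, Bool.and_eq_true, decide_eq_true_eq]
  exact ⟨a, mem_dirL a, b, mem_dirL b, hab, h⟩

def rotD (a b : Dir) : Dir → Dir
  | .xp => a | .xm => negD a | .yp => b | .ym => negD b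
  | .zp => crossD a b | .zm => negD (crossD a b)

def dotz (v q : P3) : ℤ := v 0 * q 0 + v 1 * q 1 + v 2 * q 2

def colOf (a b : Dir) : Fin 3 → Dir := ![a, b, crossD a b]

def SL (l : List Dir) : P3 := (l.map dv).sum

/-! ### finite checks -/

theorem B_PS : (stL.all fun s => (succsOf s).all fun s' => dirL.all fun a => dirL.all fun b =>
    !(orthoD a b) ||
      patB (letterOf s') (p2 (letterOf s) a b) (q3 (letterOf s) a b) (p4 (letterOf s) a b))
    = true := by decide

set_option maxRecDepth 100000 in
set_option maxHeartbeats 1600000 in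
theorem B_E1 : (dirL.all fun a => dirL.all fun b => !(orthoD a b) ||
    (tyL.all fun t => dirL.all fun x => dirL.all fun y => dirL.all fun z =>
      fstep t (rotD a b x) (rotD a b y) (rotD a b z) = rotD a b (fstep t x y z)))
    = true := by decide

theorem B_E4 : (tyL.all fun t => dirL.all fun a => dirL.all fun b => !(orthoD a b) ||
    (decide (p1 t a b = rotD a b (p1 t .xp .yp)) &&
     decide (p2 t a b = rotD a b (p2 t .xp .yp)) &&
     decide (q3 t a b = rotD a b (q3 t .xp .yp)))) = true := by decide

theorem B_E3 : (dirL.all fun a => dirL.all fun b => !(orthoD a b) || (dirL.all fun d =>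
    decide (∀ c : Fin 3, dv d c = dotz (dv (colOf a b c)) (dv (rotD a b d))))) = true := by
  decide

theorem B_NZ : (tyL.all fun t => dirL.all fun a => dirL.all fun b => !(orthoD a b) ||
    (decide (SL [p1 t a b] ≠ 0) && decide (SL [p1 t a b, p2 t a b] ≠ 0) &&
     decide (SL [p1 t a b, p2 t a b, q3 t a b] ≠ 0) &&
     decide (SL [p2 t a b] ≠ 0) && decide (SL [q3 t a b] ≠ 0) && decide (SL [p4 t a b] ≠ 0) &&
     decide (SL [p2 t a b, q3 t a b] ≠ 0) && decide (SL [q3 t a b, p4 t a b] ≠ 0) &&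
     decide (SL [p2 t a b, q3 t a b, p4 t a b] ≠ 0))) = true := by decide

theorem lem_sqNorm : ∀ d, sqNorm (dv d) = 1 := by decide

/-! ### matrices -/

def RofD (a b : Dir) : Matrix (Fin 3) (Fin 3) ℤ := Matrix.of ![dv a, dv b, dv (crossD a b)]

theorem lem_M : ∀ a b, orthoD a b = true → IsLatticeRotation (RofD a b) := by
  intro a b hab
  constructor
  · revert a b hab; decide
  · revert a b hab; decide

def ppF (t : DType) (a b : Dir) (k : ℕ) : P3 := SL ((patL t a b).take k)
def cF (t : DType) (a b : Dir) : P3 := -(RofD a b).mulVec (ppF t a b 4)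

theorem lem_W1 : ∀ a b, orthoD a b = true → ∀ k : Fin 5,
    conf1 k = (RofD a b).mulVec (ppF .r1 a b k) := by decide
theorem lem_W2 : ∀ a b, orthoD a b = true → ∀ k : Fin 5,
    conf2 k = (RofD a b).mulVec (ppF .r2 a b k) := by decide
theorem lem_W3 : ∀ a b, orthoD a b = true → ∀ k : Fin 5,
    conf1 k = (RofD a b).mulVec (ppF .l1 a b k.rev) + cF .l1 a b := by decide
theorem lem_W4 : ∀ a b, orthoD a b = true → ∀ k : Fin 5,
    conf2 k = (RofD a b).mulVec (ppF .l2 a b k.rev) + cF .l2 a b := by decide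

end Real14
namespace Real14

/-! ### SL lemmas -/

lemma SL_nil : SL [] = 0 := rfl
lemma SL_cons (d : Dir) (l : List Dir) : SL (d :: l) = dv d + SL l := by simp [SL]
lemma SL_append (l₁ l₂ : List Dir) : SL (l₁ ++ l₂) = SL l₁ + SL l₂ := by simp [SL]

lemma SL_take_add (l : List Dir) (m k : ℕ) :
    SL (l.take (m + k)) = SL (l.take m) + SL ((l.drop m).take k) := by
  rw [List.take_add, SL_append]

lemma SL_take_succ {l : List Dir} {m : ℕ} (h : m < l.length) :
    SL (l.take (m + 1)) = SL (l.take m) + dv l[m] := by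
  rw [List.take_succ, SL_append, List.getElem?_eq_getElem h]
  simp [SL]

/-! ### the walk -/

def gen : Dir → Dir → Dir → List DType → List Dir
  | _, _, _, [] => []
  | x, y, z, t :: r => fstep t x y z :: gen y z (fstep t x y z) r

def fullSteps (x y z : Dir) (u : List DType) : List Dir := x :: y :: z :: gen x y z u

lemma gen_cons (x y z : Dir) (t : DType) (r : List DType) :
    gen x y z (t :: r) = fstep t x y z :: gen y z (fstep t x y z) r := rfl

lemma fullSteps_cons (x y z : Dir) (t : DType) (r : List DType) :
    fullSteps x y z (t :: r) = x :: fullSteps y z (fstep t x y z) r := rfl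

lemma gen_length : ∀ (u : List DType) (x y z : Dir), (gen x y z u).length = u.length
  | [], _, _, _ => rfl
  | t :: r, x, y, z => by simp [gen_cons, gen_length r]

lemma fullSteps_length (x y z : Dir) (u : List DType) :
    (fullSteps x y z u).length = u.length + 3 := by
  simp [fullSteps, gen_length]

lemma gen_take : ∀ (u : List DType) (x y z : Dir) (m : ℕ),
    (gen x y z u).take m = gen x y z (u.take m)
  | [], _, _, _, m => by simp [gen]
  | t :: r, x, y, z, 0 => by simp [gen]
  | t :: r, x, y, z, m + 1 => by
      simp [gen_cons, List.take_succ_cons, gen_take r]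

/-! ### acceptance lemmas -/

lemma accepts_nil (s : St) : Accepts s [] := trivial

lemma accepts_take : ∀ (u : List DType) (s : St) (m : ℕ), Accepts s u → Accepts s (u.take m)
  | [], s, m, _ => by rw [List.take_nil]; exact trivial
  | t :: r, s, 0, _ => trivial
  | t :: r, s, m + 1, h => by
      obtain ⟨hl, s', hs', h'⟩ := h
      exact ⟨hl, s', hs', accepts_take r s' m h'⟩

lemma accepts_drop : ∀ (u : List DType) (s : St) (k : ℕ), Accepts s u →
    ∃ s', Accepts s' (u.drop k)
  | u, s, 0, h => ⟨s, h⟩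
  | [], s, k + 1, _ => ⟨s, by rw [List.drop_nil]; exact trivial⟩
  | t :: r, s, k + 1, h => by
      obtain ⟨_, s', hs', h'⟩ := h
      exact accepts_drop r s' k h'

lemma accepts_append_left : ∀ (u v : List DType) (s : St), Accepts s (u ++ v) → Accepts s u
  | [], _, _, _ => trivial
  | t :: r, v, s, h => by
      obtain ⟨hl, s', hs', h'⟩ := h
      exact ⟨hl, s', hs', accepts_append_left r v s' h'⟩

lemma accepts_alpha (r : List DType) (h : Accepts .a0 r ∨ Accepts .b0 r) :
    Accepts .a0 (wordAlpha ++ r) := by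
  show Accepts .a0 (.r1 :: .r2 :: .l2 :: .l1 :: r)
  refine ⟨rfl, .a1, by simp [succsOf], rfl, .a2, by simp [succsOf], rfl, .a3,
    by simp [succsOf], rfl, ?_⟩
  rcases h with h | h
  · exact ⟨.a0, by simp [succsOf], h⟩
  · exact ⟨.b0, by simp [succsOf], h⟩

lemma accepts_beta (r : List DType) (h : Accepts .a0 r ∨ Accepts .b0 r) :
    Accepts .b0 (wordBeta ++ r) := by
  show Accepts .b0 (.r1 :: .l1 :: r)
  refine ⟨rfl, .b1, by simp [succsOf], rfl, ?_⟩
  rcases h with h | h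
  · exact ⟨.a0, by simp [succsOf], h⟩
  · exact ⟨.b0, by simp [succsOf], h⟩

lemma accepts_flatten : ∀ (L : List (List DType)),
    (∀ u ∈ L, u = wordAlpha ∨ u = wordBeta) →
    Accepts .a0 L.flatten ∨ Accepts .b0 L.flatten
  | [], _ => Or.inl trivial
  | u :: L', h => by
      have ih := accepts_flatten L' (fun v hv => h v (List.mem_cons_of_mem u hv))
      rcases h u List.mem_cons_self with rfl | rfl
      · exact Or.inl (by rw [List.flatten_cons]; exact accepts_alpha _ ih)
      · exact Or.inr (by rw [List.flatten_cons]; exact accepts_beta _ ih)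

lemma admissible_accepts {w : List DType} (hw : Admissible w) : ∃ s, Accepts s w := by
  obtain ⟨v, ⟨L, hL, rfl⟩, pre, suf, hv⟩ := hw
  have hacc : ∃ s, Accepts s L.flatten := by
    rcases accepts_flatten L hL with h | h
    · exact ⟨_, h⟩
    · exact ⟨_, h⟩
  obtain ⟨s, hs⟩ := hacc
  rw [← hv, List.append_assoc] at hs
  obtain ⟨s', hs'⟩ := accepts_drop _ s pre.length hs
  rw [List.drop_left] at hs'
  exact ⟨s', accepts_append_left _ _ _ hs'⟩

/-! ### propagation invariant -/

lemma lem_PS {s s' : St} (hs : s' ∈ succsOf s) {x y z : Dir}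
    (h : PatD (letterOf s) x y z) :
    PatD (letterOf s') y z (fstep (letterOf s) x y z) := by
  obtain ⟨a, b, hab, hp⟩ := PatD_elim h
  have hB := B_PS
  simp only [List.all_eq_true, Bool.or_eq_true, Bool.not_eq_true'] at hB
  rcases hB s (mem_stL s) s' hs a (mem_dirL a) b (mem_dirL b) with h2 | h2
  · rw [hab] at h2; cases h2
  · have e1 : p1 (letterOf s) a b = x := by rw [p1, hp]
    have e2 : p2 (letterOf s) a b = y := by rw [p2, hp]
    have e3 : q3 (letterOf s) a b = z := by rw [q3, hp]
    have e4 : p4 (letterOf s) a b = fstep (letterOf s) x y z := by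
      rw [p4, e1, e2, e3]
    rw [e2, e3, e4] at h2
    exact h2

lemma ML : ∀ (k : ℕ) (u : List DType) (s : St) (x y z : Dir), Accepts s u →
    PatD (letterOf s) x y z → k < u.length →
    ∃ s' x' y' z', Accepts s' (u.drop k) ∧ PatD (letterOf s') x' y' z' ∧
      (fullSteps x y z u).drop k = fullSteps x' y' z' (u.drop k)
  | 0, u, s, x, y, z, ha, hp, _ => ⟨s, x, y, z, ha, hp, rfl⟩
  | k + 1, [], s, x, y, z, ha, hp, hk => by simp at hk
  | k + 1, t :: r, s, x, y, z, ha, hp, hk => by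
      obtain ⟨hl, s', hs', ha'⟩ := ha
      have hp' : PatD (letterOf s') y z (fstep t x y z) := by
        rw [← hl]; exact lem_PS hs' hp
      have hk' : k < r.length := by simpa using hk
      obtain ⟨s'', x', y', z', h1, h2, h3⟩ := ML k r s' y z (fstep t x y z) ha' hp' hk'
      exact ⟨s'', x', y', z', h1, h2, by rw [fullSteps_cons]; simpa using h3⟩

end Real14
namespace Real14

/-! ### search -/

def addv (p q : V3) : V3 := (p.1 + q.1, p.2.1 + q.2.1, p.2.2 + q.2.2)
def l1n (p : V3) : ℕ := p.1.natAbs + p.2.1.natAbs + p.2.2.natAbs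

lemma addv_eq (p q : V3) : addv p q = p + q := rfl

def search : ℕ → St → Dir → Dir → Dir → V3 → Bool
  | 0, _, _, _, _, _ => true
  | n + 1, s, x, y, z, p =>
    let w := fstep (letterOf s) x y z
    let q := addv p (dvV w)
    !(q = ((0, 0, 0) : V3) : Bool) &&
      ((n < l1n q : Bool) || (succsOf s).all fun s' => search n s' y z w q)

lemma search_succ (n : ℕ) (s : St) (x y z : Dir) (p : V3) :
    search (n + 1) s x y z p = (
      !(addv p (dvV (fstep (letterOf s) x y z)) = ((0, 0, 0) : V3) : Bool) &&
      ((n < l1n (addv p (dvV (fstep (letterOf s) x y z))) : Bool) ||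
        (succsOf s).all fun s' =>
          search n s' y z (fstep (letterOf s) x y z)
            (addv p (dvV (fstep (letterOf s) x y z))))) := rfl

def sumV (l : List Dir) : V3 := (l.map dvV).sum

lemma sumV_nil : sumV [] = 0 := rfl
lemma sumV_cons (d : Dir) (l : List Dir) : sumV (d :: l) = dvV d + sumV l := by simp [sumV]

def l1z (v : V3) : ℤ := |v.1| + |v.2.1| + |v.2.2|

lemma l1n_cast (v : V3) : (l1n v : ℤ) = l1z v := by
  simp only [l1n, l1z, Int.abs_eq_natAbs]
  push_cast
  ring

lemma l1z_add_le (p q : V3) : l1z (p + q) ≤ l1z p + l1z q := by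
  have h1 := abs_add_le p.1 q.1
  have h2 := abs_add_le p.2.1 q.2.1
  have h3 := abs_add_le p.2.2 q.2.2
  simp only [l1z, Prod.fst_add, Prod.snd_add]
  linarith

lemma l1z_dvV (d : Dir) : l1z (dvV d) = 1 := by cases d <;> rfl

lemma l1z_sumV_le : ∀ l : List Dir, l1z (sumV l) ≤ l.length
  | [] => by simp [sumV_nil]; rfl
  | d :: r => by
      rw [sumV_cons]
      calc l1z (dvV d + sumV r) ≤ l1z (dvV d) + l1z (sumV r) := l1z_add_le _ _
      _ ≤ 1 + r.length := by
          have := l1z_sumV_le r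
          rw [l1z_dvV]; omega
      _ = (d :: r).length := by simp [List.length_cons]; omega

lemma l1z_neg (v : V3) : l1z (-v) = l1z v := by
  simp [l1z]

lemma SND : ∀ (u : List DType) (n : ℕ) (s : St) (x y z : Dir) (p : V3),
    search n s x y z p = true → Accepts s u → u ≠ [] → u.length ≤ n →
    p + sumV (gen x y z u) ≠ 0
  | [], _, _, _, _, _, _, _, _, hne, _ => absurd rfl hne
  | t :: r, 0, s, x, y, z, p, _, _, _, hlen => by simp at hlen
  | t :: r, n + 1, s, x, y, z, p, hs, ha, _, hlen => by
      obtain ⟨hl, s', hmem, ha'⟩ := ha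
      rw [search_succ] at hs
      simp only [Bool.and_eq_true, Bool.or_eq_true, List.all_eq_true, decide_eq_true_eq,
        Bool.not_eq_true', decide_eq_false_iff_not] at hs
      obtain ⟨hq0, hrest⟩ := hs
      rw [hl] at hq0 hrest
      set wd := fstep t x y z with hwd
      have hsum : p + sumV (gen x y z (t :: r)) = (p + dvV wd) + sumV (gen y z wd r) := by
        rw [gen_cons, sumV_cons, ← hwd]; ring
      rw [addv_eq] at hq0 hrest
      cases r with
      | nil =>
          rw [hsum, gen, sumV_nil, add_zero]
          exact hq0
      | cons t' r' =>
          rcases hrest with hbig | hchild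
          · rw [hsum]
            intro hzero
            have hneg : sumV (gen y z wd (t' :: r')) = -(p + dvV wd) :=
              eq_neg_of_add_eq_zero_right hzero
            have h1 : l1z (sumV (gen y z wd (t' :: r'))) ≤ ((gen y z wd (t' :: r')).length : ℤ) :=
              l1z_sumV_le _
            rw [gen_length, hneg, l1z_neg] at h1
            have h2 := l1n_cast (p + dvV wd)
            have h3 : (t' :: r').length ≤ n := by simpa using hlen
            have h4 : ((t' :: r').length : ℤ) = (t' :: r').length := rfl
            omega
          · rw [hsum]
            exact SND (t' :: r') n s' y z wd (p + dvV wd)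
              (by rw [← addv_eq]; exact hchild s' hmem) ha' (by simp) (by simpa using hlen)

end Real14
namespace Real14

/-! ### V3 → P3 bridge -/

def toP3 (v : V3) : P3 := ![v.1, v.2.1, v.2.2]

lemma toP3_add (p q : V3) : toP3 (p + q) = toP3 p + toP3 q := by
  funext c
  fin_cases c <;> simp [toP3]

lemma toP3_zero : toP3 0 = 0 := by
  funext c; fin_cases c <;> rfl

lemma toP3_dvV (d : Dir) : toP3 (dvV d) = dv d := by
  cases d <;> rfl

lemma toP3_eq_zero {v : V3} (h : toP3 v = 0) : v = 0 := by
  have h0 := congrFun h 0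
  have h1 := congrFun h 1
  have h2 := congrFun h 2
  simp [toP3] at h0 h1 h2
  exact Prod.ext h0 (Prod.ext h1 h2)

lemma SL_eq_toP3 : ∀ l : List Dir, SL l = toP3 (sumV l)
  | [] => by rw [SL_nil, sumV_nil, toP3_zero]
  | d :: r => by rw [SL_cons, sumV_cons, toP3_add, toP3_dvV, SL_eq_toP3 r]

/-! ### rotation transfer -/

lemma lem_E1 {a b : Dir} (hab : orthoD a b = true) (t : DType) (x y z : Dir) :
    fstep t (rotD a b x) (rotD a b y) (rotD a b z) = rotD a b (fstep t x y z) := by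
  have hB := B_E1
  simp only [List.all_eq_true, Bool.or_eq_true, Bool.not_eq_true'] at hB
  rcases hB a (mem_dirL a) b (mem_dirL b) with h | h
  · rw [hab] at h; cases h
  · have := h t (by cases t <;> simp [tyL]) x (mem_dirL x) y (mem_dirL y) z (mem_dirL z)
    exact of_decide_eq_true this

lemma gen_rot {a b : Dir} (hab : orthoD a b = true) :
    ∀ (u : List DType) (x y z : Dir),
      gen (rotD a b x) (rotD a b y) (rotD a b z) u = (gen x y z u).map (rotD a b)
  | [], _, _, _ => rfl
  | t :: r, x, y, z => by
      rw [gen_cons, gen_cons, List.map_cons, lem_E1 hab, gen_rot hab r]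

lemma lem_E3 {a b : Dir} (hab : orthoD a b = true) (d : Dir) (c : Fin 3) :
    dv d c = dotz (dv (colOf a b c)) (dv (rotD a b d)) := by
  have hB := B_E3
  simp only [List.all_eq_true, Bool.or_eq_true, Bool.not_eq_true'] at hB
  rcases hB a (mem_dirL a) b (mem_dirL b) with h | h
  · rw [hab] at h; cases h
  · exact of_decide_eq_true (h d (mem_dirL d)) c

lemma dotz_add (v p q : P3) : dotz v (p + q) = dotz v p + dotz v q := by
  simp [dotz]; ring

lemma dotz_zero (v : P3) : dotz v 0 = 0 := by
  simp [dotz]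

lemma SL_coord {a b : Dir} (hab : orthoD a b = true) :
    ∀ (l : List Dir) (c : Fin 3),
      SL l c = dotz (dv (colOf a b c)) (SL (l.map (rotD a b)))
  | [], c => by rw [SL_nil, List.map_nil, SL_nil, dotz_zero]; rfl
  | d :: r, c => by
      rw [List.map_cons, SL_cons, SL_cons, dotz_add, ← SL_coord hab r c, ← lem_E3 hab]
      rfl

lemma SL_rot_ne {a b : Dir} (hab : orthoD a b = true) {l : List Dir} (h : SL l ≠ 0) :
    SL (l.map (rotD a b)) ≠ 0 := by
  intro hz
  apply h
  funext c
  rw [SL_coord hab l c, hz, dotz_zero]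
  rfl

lemma lem_E4 {t : DType} {x y z : Dir} (h : PatD t x y z) :
    ∃ a b, orthoD a b = true ∧ x = rotD a b (p1 t .xp .yp) ∧
      y = rotD a b (p2 t .xp .yp) ∧ z = rotD a b (q3 t .xp .yp) := by
  obtain ⟨a, b, hab, hp⟩ := PatD_elim h
  refine ⟨a, b, hab, ?_⟩
  have hB := B_E4
  simp only [List.all_eq_true, Bool.or_eq_true, Bool.not_eq_true', Bool.and_eq_true,
    decide_eq_true_eq] at hB
  rcases hB t (by cases t <;> simp [tyL]) a (mem_dirL a) b (mem_dirL b) with h2 | h2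
  · rw [hab] at h2; cases h2
  · obtain ⟨⟨e1, e2⟩, e3⟩ := h2
    refine ⟨?_, ?_, ?_⟩
    · rw [← e1, p1, hp]
    · rw [← e2, p2, hp]
    · rw [← e3, q3, hp]

/-! ### the big finite search -/

set_option maxRecDepth 1000000 in
set_option maxHeartbeats 1600000 in
theorem bigsearch : ∀ s : St,
    search 34 s (p1 (letterOf s) .xp .yp) (p2 (letterOf s) .xp .yp) (q3 (letterOf s) .xp .yp)
      (dvV (p1 (letterOf s) .xp .yp) + dvV (p2 (letterOf s) .xp .yp) +
        dvV (q3 (letterOf s) .xp .yp)) = true := by decide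

end Real14
namespace Real14

lemma lem_NZ {t : DType} {x y z : Dir} (h : PatD t x y z) :
    SL [x] ≠ 0 ∧ SL [x, y] ≠ 0 ∧ SL [x, y, z] ≠ 0 ∧ SL [y] ≠ 0 ∧ SL [z] ≠ 0 ∧
    SL [fstep t x y z] ≠ 0 ∧ SL [y, z] ≠ 0 ∧ SL [z, fstep t x y z] ≠ 0 ∧
    SL [y, z, fstep t x y z] ≠ 0 := by
  obtain ⟨a, b, hab, hp⟩ := PatD_elim h
  have e1 : p1 t a b = x := by rw [p1, hp]
  have e2 : p2 t a b = y := by rw [p2, hp]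
  have e3 : q3 t a b = z := by rw [q3, hp]
  have e4 : p4 t a b = fstep t x y z := by rw [p4, e1, e2, e3]
  have hB := B_NZ
  simp only [List.all_eq_true, Bool.or_eq_true, Bool.not_eq_true', Bool.and_eq_true,
    decide_eq_true_eq] at hB
  rcases hB t (by cases t <;> simp [tyL]) a (mem_dirL a) b (mem_dirL b) with h2 | h2
  · rw [hab] at h2; cases h2
  · rw [e1, e2, e3, e4] at h2
    tauto

lemma pat3_eta (t : DType) (a b : Dir) : pat3 t a b = (p1 t a b, p2 t a b, q3 t a b) := rfl

lemma ortho_xpyp : orthoD .xp .yp = true := by decide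

/-- The canonical step list of a word. -/
def stps (w : List DType) : List Dir :=
  fullSteps (p1 (w.headD .r1) .xp .yp) (p2 (w.headD .r1) .xp .yp)
    (q3 (w.headD .r1) .xp .yp) w

lemma stps_length (w : List DType) : (stps w).length = w.length + 3 :=
  fullSteps_length _ _ _ _

lemma initial_pat {w : List DType} {s0 : St} (ha : Accepts s0 w) (hne : w ≠ []) :
    PatD (letterOf s0) (p1 (w.headD .r1) .xp .yp) (p2 (w.headD .r1) .xp .yp)
      (q3 (w.headD .r1) .xp .yp) := by
  obtain ⟨t, r, rfl⟩ := List.exists_cons_of_ne_nil hne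
  obtain ⟨hl, -⟩ := ha
  rw [List.headD_cons, hl]
  exact PatD_intro ortho_xpyp (pat3_eta t .xp .yp).symm

/-- Master lemma, specialized to the canonical walk. -/
lemma MLC {w : List DType} {s0 : St} (ha : Accepts s0 w) (hne : w ≠ []) {k : ℕ}
    (hk : k < w.length) :
    ∃ s' x' y' z', Accepts s' (w.drop k) ∧ PatD (letterOf s') x' y' z' ∧
      (stps w).drop k = fullSteps x' y' z' (w.drop k) :=
  ML k w s0 _ _ _ ha (initial_pat ha hne) hk

/-- Central self-avoidance: partial sums of segments of the canonical walk
are nonzero. -/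
lemma SEG {w : List DType} {s0 : St} (ha : Accepts s0 w) (hne : w ≠ [])
    (h34 : w.length ≤ 34) :
    ∀ i g : ℕ, 1 ≤ g → i + g ≤ w.length + 3 →
      SL ((((stps w).drop i)).take g) ≠ 0 := by
  intro i g hg hig
  by_cases hi : i < w.length
  · -- start within the letter range
    obtain ⟨s', x', y', z', ha', hp', hdrop⟩ := MLC ha hne hi
    obtain ⟨t, rest, hcons⟩ := List.exists_cons_of_ne_nil
      (by rw [← List.length_pos_iff_ne_nil, List.length_drop]; omega :
        w.drop i ≠ [])
    by_cases hg3 : g ≤ 3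
    · obtain ⟨n1, n2, n3, _, _, _, -⟩ := lem_NZ hp'
      rw [hdrop, hcons]
      interval_cases g
      · simpa [fullSteps] using n1
      · simpa [fullSteps] using n2
      · simpa [fullSteps] using n3
    · -- long segment: use the search
      set m := g - 3 with hm
      have hm1 : 1 ≤ m := by omega
      have hmlen : m ≤ (w.drop i).length := by
        rw [List.length_drop]; omega
      set u'' := (w.drop i).take m with hu''
      have ha'' : Accepts s' u'' := accepts_take _ _ _ ha'
      have hu''ne : u'' ≠ [] := by
        rw [← List.length_pos_iff_ne_nil, hu'', List.length_take]; omega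
      have hu''len : u''.length = m := by
        rw [hu'', List.length_take]; omega
      -- rotate to the canonical frame
      obtain ⟨a, b, hab, hx, hy, hz⟩ := lem_E4 hp'
      set xc := p1 (letterOf s') .xp .yp
      set yc := p2 (letterOf s') .xp .yp
      set zc := q3 (letterOf s') .xp .yp
      have hsearch := bigsearch s'
      have hsnd := SND u'' 34 s' xc yc zc (dvV xc + dvV yc + dvV zc) hsearch ha'' hu''ne
        (by omega)
      -- the canonical list is nonzero
      have hcan : SL (xc :: yc :: zc :: gen xc yc zc u'') ≠ 0 := by
        rw [SL_eq_toP3]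
        intro hzero
        apply hsnd
        have := toP3_eq_zero hzero
        rw [sumV_cons, sumV_cons, sumV_cons] at this
        rw [add_assoc, add_assoc]
        exact this
      have hrot := SL_rot_ne hab hcan
      -- identify the segment with the rotated canonical list
      have hseg : ((stps w).drop i).take g
          = (xc :: yc :: zc :: gen xc yc zc u'').map (rotD a b) := by
        rw [hdrop, hcons]
        have hgm : g = m + 1 + 1 + 1 := by omega
        rw [hgm]
        show (fullSteps x' y' z' (t :: rest)).take (m + 1 + 1 + 1) = _
        rw [fullSteps]
        rw [List.take_succ_cons, List.take_succ_cons, List.take_succ_cons]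
        rw [gen_take, List.map_cons, List.map_cons, List.map_cons]
        rw [hx, hy, hz, gen_rot hab]
        rw [hu'', hcons]
      rw [hseg]
      exact hrot
  · -- start in the final three steps
    have hwl : 1 ≤ w.length := by
      rw [Nat.one_le_iff_ne_zero, ← List.length_pos_iff_ne_nil] at *; omega
    set k := w.length - 1 with hk
    obtain ⟨s', x', y', z', ha', hp', hdrop⟩ := MLC ha hne (by omega : k < w.length)
    obtain ⟨t, rest, hcons⟩ := List.exists_cons_of_ne_nil
      (by rw [← List.length_pos_iff_ne_nil, List.length_drop]; omega :
        w.drop k ≠ [])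
    have hrest : rest = [] := by
      have := congrArg List.length hcons
      rw [List.length_drop] at this
      simp at this
      rcases rest with - | ⟨r1, r2⟩
      · rfl
      · exfalso; simp at this; omega
    rw [hrest] at hcons
    have hl' : letterOf s' = t := by rw [hcons] at ha'; exact ha'.1
    have hp'' : PatD t x' y' z' := hl' ▸ hp'
    obtain ⟨-, -, -, n4, n5, n6, n7, n8, n9⟩ := lem_NZ hp''
    have hdrop2 : (stps w).drop i = List.drop (i - k) [x', y', z', fstep t x' y' z'] := by
      have h2 : (stps w).drop i = ((stps w).drop k).drop (i - k) := by
        rw [List.drop_drop]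
        congr 1
        omega
      rw [h2, hdrop, hcons]
      rfl
    rw [hdrop2]
    have hsl := stps_length w
    have hcase : (i - k = 1 ∨ i - k = 2 ∨ i - k = 3) ∧ (g = 1 ∨ g = 2 ∨ g = 3) ∧
        (i - k) + g ≤ 4 := by omega
    obtain ⟨ho, hgc, hog⟩ := hcase
    rcases ho with ho | ho | ho <;> rcases hgc with rfl | rfl | rfl <;> rw [ho] <;>
      first
      | (exfalso; omega)
      | simpa using n4
      | simpa using n5
      | simpa using n6
      | simpa using n7
      | simpa using n8
      | simpa using n9

end Real14
namespace Real14

lemma HT_core {t : DType} {a b : Dir} (hab : orthoD a b = true) (B : P3)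
    (Δ : Fin 5 → P3) (hΔ : ∀ k : Fin 5, Δ k = B + ppF t a b (k : ℕ)) :
    HasType Δ t := by
  have hrev : ∀ k : Fin 5, rev5 Δ k = B + ppF t a b ((k.rev : Fin 5) : ℕ) := fun k => hΔ k.rev
  cases t
  case r1 =>
    refine ⟨RofD a b, -(RofD a b).mulVec B, lem_M a b hab, fun k => ?_⟩
    rw [hΔ k, Matrix.mulVec_add, lem_W1 a b hab k]
    abel
  case r2 =>
    refine ⟨RofD a b, -(RofD a b).mulVec B, lem_M a b hab, fun k => ?_⟩
    rw [hΔ k, Matrix.mulVec_add, lem_W2 a b hab k]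
    abel
  case l1 =>
    refine ⟨RofD a b, cF .l1 a b - (RofD a b).mulVec B, lem_M a b hab, fun k => ?_⟩
    rw [hrev k, Matrix.mulVec_add, lem_W3 a b hab k]
    abel
  case l2 =>
    refine ⟨RofD a b, cF .l2 a b - (RofD a b).mulVec B, lem_M a b hab, fun k => ?_⟩
    rw [hrev k, Matrix.mulVec_add, lem_W4 a b hab k]
    abel

lemma HT {w : List DType} {s0 : St} (ha : Accepts s0 w) (hne : w ≠ [])
    {j : ℕ} (hj : j < w.length) :
    HasType (window (fun m => SL ((stps w).take (m - 1))) (3 + j)) w[j] := by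
  obtain ⟨s', x', y', z', ha', hp', hdrop⟩ := MLC ha hne hj
  have hconsw : w.drop j = w[j] :: w.drop (j + 1) := List.drop_eq_getElem_cons hj
  have hl' : letterOf s' = w[j] := by rw [hconsw] at ha'; exact ha'.1
  have hp2 : PatD w[j] x' y' z' := hl' ▸ hp'
  obtain ⟨a, b, hab, hp3⟩ := PatD_elim hp2
  refine HT_core hab (SL ((stps w).take j)) _ (fun k => ?_)
  show SL ((stps w).take (3 + j - 2 + (k : ℕ) - 1)) = _
  have harith : 3 + j - 2 + (k : ℕ) - 1 = j + (k : ℕ) := by omega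
  rw [harith, SL_take_add, hdrop, hconsw]
  congr 1
  have e1 : p1 w[j] a b = x' := by rw [p1, hp3]
  have e2 : p2 w[j] a b = y' := by rw [p2, hp3]
  have e3 : q3 w[j] a b = z' := by rw [q3, hp3]
  have e4 : p4 w[j] a b = fstep w[j] x' y' z' := by rw [p4, e1, e2, e3]
  show _ = SL ((patL w[j] a b).take (k : ℕ))
  rw [patL, e1, e2, e3, e4]
  congr 1
  fin_cases k <;> rfl

end Real14


/-- for every `6 < N < 39`, every admissible word of length
`N − 4` is the type sequence of some minimal conformation of length `N`
(i.e. is realized without self-intersection). -/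
theorem admissible_word_realized (N : ℕ) (h1 : 6 < N) (h2 : N < 39)
    (w : List DType) (hw : Admissible w) (hlen : w.length = N - 4) :
    ∃ Γ : ℕ → P3, IsMinimal N Γ ∧ HasTypeSeq N Γ w := by
  have hwl : w.length = N - 4 := hlen
  have hne : w ≠ [] := by
    intro h
    rw [h] at hwl
    simp at hwl
    omega
  obtain ⟨s0, ha⟩ := Real14.admissible_accepts hw
  have hsl := Real14.stps_length w
  refine ⟨fun m => Real14.SL ((Real14.stps w).take (m - 1)), ⟨⟨?_, ?_⟩, ?_⟩, hlen, ?_⟩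
  · -- injectivity
    have aux : ∀ p q, p ∈ Set.Icc 1 N → q ∈ Set.Icc 1 N → p < q →
        Real14.SL ((Real14.stps w).take (p - 1)) ≠ Real14.SL ((Real14.stps w).take (q - 1)) := by
      intro p q hp hq hpq heq
      rw [Set.mem_Icc] at hp hq
      have hseg := Real14.SEG ha hne (by omega) (p - 1) (q - p) (by omega) (by omega)
      apply hseg
      have h := Real14.SL_take_add (Real14.stps w) (p - 1) (q - p)
      rw [show (p - 1) + (q - p) = q - 1 by omega, ← heq] at h
      exact (left_eq_add.mp h).symm ▸ rfl
    intro p hp q hq heq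
    rcases lt_trichotomy p q with h | h | h
    · exact absurd heq (aux p q hp hq h)
    · exact h
    · exact absurd heq.symm (aux q p hq hp h)
  · -- unit steps
    intro i hi1 hiN
    have hlt : i - 1 < (Real14.stps w).length := by omega
    have h := Real14.SL_take_succ hlt
    have heq : Real14.SL ((Real14.stps w).take (i + 1 - 1)) -
        Real14.SL ((Real14.stps w).take (i - 1)) = Real14.dv ((Real14.stps w)[i-1]) := by
      rw [show i + 1 - 1 = (i - 1) + 1 by omega, h]
      abel
    rw [heq]
    exact Real14.lem_sqNorm _
  · -- windows good
    intro i hi3 hiN2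
    have hj : i - 3 < w.length := by omega
    have hht := Real14.HT ha hne hj
    rw [show 3 + (i - 3) = i by omega] at hht
    rcases hc : w[i - 3] with - | - | - | - <;> rw [hc] at hht
    · exact Or.inl hht
    · exact Or.inr (Or.inl hht)
    · exact Or.inr (Or.inr (Or.inl hht))
    · exact Or.inr (Or.inr (Or.inr hht))
  · -- type sequence
    intro j h
    have hht := Real14.HT ha hne (h : j < w.length)
    simpa [List.get_eq_getElem] using hht
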